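/- One-cycle estimate for the splitting proximal point algorithm: let (H,d) be a Hadamard space, f₁,…,f_N : H → (−∞,∞] proper convex lower semicontinuous functions, f = Σₙ fₙ, λ > 0, and L > 0. Suppose y₀, y₁,…,y_N ∈ H are such that for each n = 1,…,N the point yₙ is a minimizer of z ↦ fₙ(z) + (1/(2λ))·d(y_{n−1},z)², and fₙ(y₀) − fₙ(yₙ) ≤ L·d(y₀,yₙ) as well as fₙ(y_{n−1}) − fₙ(yₙ) ≤ L·d(y_{n−1},yₙ). Then for every y ∈ H with f(y) < ∞, d(y_N,y)² ≤ d(y₀,y)² − 2λ·(f(y₀) − f(y)) + 2λ²·L²·N·(N+1). -/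

import Mathlib

open Filter Topology

/-- A Hadamard space structure on a metric space `H`: a geodesic combination map
`geo x y t = (1-t)x ⊕ ty` satisfying the geodesic axioms and the CAT(0) inequality.
(Completeness is imposed via the `CompleteSpace` instance in the theorems.) -/
structure Hadamard (H : Type*) [MetricSpace H] : Type _ where
  geo : H → H → ℝ → H
  geo_zero : ∀ x y : H, geo x y 0 = x
  geo_one : ∀ x y : H, geo x y 1 = y
  geo_dist : ∀ x y : H, ∀ s ∈ Set.Icc (0 : ℝ) 1, ∀ t ∈ Set.Icc (0 : ℝ) 1,
    dist (geo x y s) (geo x y t) = |s - t| * dist x y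
  cat0 : ∀ z x y : H, ∀ t ∈ Set.Icc (0 : ℝ) 1,
    dist z (geo x y t) ^ 2
      ≤ (1 - t) * dist z x ^ 2 + t * dist z y ^ 2 - t * (1 - t) * dist x y ^ 2

/-- A function `f : H → (-∞,∞]` is (geodesically) convex if along every geodesic
`t ↦ (1-t)x ⊕ ty` it satisfies the convexity inequality. -/
def GeoConvex {H : Type*} [MetricSpace H] (G : Hadamard H) (f : H → EReal) : Prop :=
  ∀ x y : H, ∀ t ∈ Set.Icc (0 : ℝ) 1,
    f (G.geo x y t) ≤ ((1 - t : ℝ) : EReal) * f x + ((t : ℝ) : EReal) * f y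

/-- Shaving lemma: if `a ≤ b + t*c` for all small positive `t`, then `a ≤ b`. -/
lemma le_shave {a b c : ℝ} (hc : 0 ≤ c)
    (h : ∀ t : ℝ, 0 < t → t ≤ 1 → a ≤ b + t * c) : a ≤ b := by
  apply le_of_forall_pos_le_add
  intro ε hε
  have hc1 : (0:ℝ) < c + 1 := by linarith
  set t : ℝ := min 1 (ε / (c + 1)) with ht
  have ht0 : 0 < t := lt_min one_pos (div_pos hε hc1)
  have ht1 : t ≤ 1 := min_le_left _ _
  have htc : t * c ≤ ε := by
    have h1 : t ≤ ε / (c + 1) := min_le_right _ _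
    have h2 : t * c ≤ (ε / (c + 1)) * c := mul_le_mul_of_nonneg_right h1 hc
    have h3 : (ε / (c + 1)) * c ≤ ε := by
      rw [div_mul_eq_mul_div, div_le_iff₀ hc1]
      nlinarith
    linarith
  have := h t ht0 ht1
  linarith

/-- Sum of non-`⊥` extended reals is non-`⊥`. -/
lemma ereal_sum_ne_bot {ι : Type*} {s : Finset ι} {g : ι → EReal}
    (h : ∀ i ∈ s, g i ≠ ⊥) : ∑ i ∈ s, g i ≠ ⊥ := by
  classical
  induction s using Finset.induction_on with
  | empty => simp
  | @insert a s ha ih =>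
    rw [Finset.sum_insert ha]
    rw [Ne, EReal.add_eq_bot_iff]
    push_neg
    exact ⟨h a (Finset.mem_insert_self a s),
      ih fun i hi => h i (Finset.mem_insert_of_mem hi)⟩

/-- If a finite sum of non-`⊥` extended reals is `< ⊤`, each term is `≠ ⊤`. -/
lemma ereal_term_ne_top {ι : Type*} {s : Finset ι} {g : ι → EReal}
    (hb : ∀ i ∈ s, g i ≠ ⊥) (ht : ∑ i ∈ s, g i < ⊤) :
    ∀ i ∈ s, g i ≠ ⊤ := by
  classical
  intro i hi htop
  rw [← Finset.add_sum_erase _ _ hi, htop] at ht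
  have hrest : ∑ j ∈ s.erase i, g j ≠ ⊥ :=
    ereal_sum_ne_bot fun j hj => hb j (Finset.mem_of_mem_erase hj)
  rw [EReal.top_add_of_ne_bot hrest] at ht
  exact (lt_irrefl _ ht)

/-- Coercion of a real finite sum. -/
lemma ereal_coe_sum {ι : Type*} (s : Finset ι) (g : ι → ℝ) :
    ((∑ i ∈ s, g i : ℝ) : EReal) = ∑ i ∈ s, ((g i : ℝ) : EReal) := by
  classical
  induction s using Finset.induction_on with
  | empty => simp
  | @insert a s ha ih =>
    rw [Finset.sum_insert ha, Finset.sum_insert ha, ← ih]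
    norm_cast

/-- The key proximal-point inequality in a Hadamard space. -/
lemma prox_ineq {H : Type*} [MetricSpace H] (G : Hadamard H)
    (f : H → EReal) (hconv : GeoConvex G f)
    (lam : ℝ) (hlam : 0 < lam) (p q w : H) (rq rw' : ℝ)
    (hq : f q = (rq : EReal)) (hw : f w = (rw' : EReal))
    (hmin : ∀ x : H,
      f q + ((1 / (2 * lam) * dist p q ^ 2 : ℝ) : EReal)
        ≤ f x + ((1 / (2 * lam) * dist p x ^ 2 : ℝ) : EReal)) :
    2 * lam * (rq - rw') ≤ dist p w ^ 2 - dist p q ^ 2 - dist q w ^ 2 := by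
  set A := dist p q ^ 2 with hA
  set B := dist p w ^ 2 with hB
  set C := dist q w ^ 2 with hC
  have hC0 : 0 ≤ C := sq_nonneg _
  apply le_shave hC0
  intro t ht0 ht1
  have htmem : t ∈ Set.Icc (0:ℝ) 1 := ⟨le_of_lt ht0, ht1⟩
  -- minimality at the geodesic point
  have h1 := hmin (G.geo q w t)
  have h2 := hconv q w t htmem
  rw [hq, hw] at h2
  have h2' : f (G.geo q w t) ≤ (((1 - t) * rq + t * rw' : ℝ) : EReal) := by
    refine h2.trans_eq ?_
    norm_cast
  have h3 : (rq : EReal) + ((1 / (2 * lam) * A : ℝ) : EReal)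
      ≤ (((1 - t) * rq + t * rw' : ℝ) : EReal)
        + ((1 / (2 * lam) * dist p (G.geo q w t) ^ 2 : ℝ) : EReal) := by
    rw [hq] at h1
    exact h1.trans (add_le_add_left h2' _)
  have h4 : rq + 1 / (2 * lam) * A
      ≤ (1 - t) * rq + t * rw' + 1 / (2 * lam) * dist p (G.geo q w t) ^ 2 := by
    exact_mod_cast h3
  have hcat := G.cat0 p q w t htmem
  rw [← hA, ← hB, ← hC] at hcat
  set dg := dist p (G.geo q w t) ^ 2 with hdg
  -- eliminate the 1/(2λ) factor
  have h5 : t * (rq - rw') ≤ 1 / (2 * lam) * (dg - A) := by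
    have : 1 / (2 * lam) * (dg - A) = 1 / (2 * lam) * dg - 1 / (2 * lam) * A := by ring
    rw [this]; linarith
  have h2l : (0:ℝ) < 2 * lam := by linarith
  have h6 : t * (rq - rw') * (2 * lam) ≤ dg - A := by
    have := mul_le_mul_of_nonneg_right h5 h2l.le
    calc t * (rq - rw') * (2 * lam) ≤ 1 / (2 * lam) * (dg - A) * (2 * lam) := this
      _ = dg - A := by field_simp
  have h7 : t * (2 * lam * (rq - rw')) ≤ t * (B - A - (1 - t) * C) := by nlinarith
  have h8 : 2 * lam * (rq - rw') ≤ B - A - (1 - t) * C := (mul_le_mul_iff_right₀ ht0).mp h7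
  linarith

/-- One-cycle estimate for the splitting proximal point algorithm. -/
theorem one_cycle_estimate
    {H : Type*} [MetricSpace H] [CompleteSpace H] (G : Hadamard H)
    (N : ℕ) (hN : 1 ≤ N)
    (fs : ℕ → H → EReal)
    (hfs_ne_bot : ∀ n ∈ Finset.Icc 1 N, ∀ x : H, fs n x ≠ ⊥)
    (hfs_proper : ∀ n ∈ Finset.Icc 1 N, ∃ x : H, fs n x ≠ ⊤)
    (hfs_conv : ∀ n ∈ Finset.Icc 1 N, GeoConvex G (fs n))
    (hfs_lsc : ∀ n ∈ Finset.Icc 1 N, LowerSemicontinuous (fs n))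
    (lam L : ℝ) (hlam : 0 < lam) (hL : 0 < L)
    (y : ℕ → H)
    (hmin : ∀ n ∈ Finset.Icc 1 N, ∀ z : H,
      fs n (y n) + ((1 / (2 * lam) * dist (y (n - 1)) (y n) ^ 2 : ℝ) : EReal)
        ≤ fs n z + ((1 / (2 * lam) * dist (y (n - 1)) z ^ 2 : ℝ) : EReal))
    (hlip₀ : ∀ n ∈ Finset.Icc 1 N,
      fs n (y 0) - fs n (y n) ≤ ((L * dist (y 0) (y n) : ℝ) : EReal))
    (hlip₁ : ∀ n ∈ Finset.Icc 1 N,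
      fs n (y (n - 1)) - fs n (y n) ≤ ((L * dist (y (n - 1)) (y n) : ℝ) : EReal))
    (z : H) (hz : (∑ n ∈ Finset.Icc 1 N, fs n z) < ⊤) :
    ((dist (y N) z ^ 2 : ℝ) : EReal)
      ≤ ((dist (y 0) z ^ 2 : ℝ) : EReal)
          - ((2 * lam : ℝ) : EReal)
            * ((∑ n ∈ Finset.Icc 1 N, fs n (y 0)) - ∑ n ∈ Finset.Icc 1 N, fs n z)
          + ((2 * lam ^ 2 * L ^ 2 * (N : ℝ) * ((N : ℝ) + 1) : ℝ) : EReal) := by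
  classical
  set ra : ℕ → ℝ := fun n => (fs n (y n)).toReal with hra_def
  set rz : ℕ → ℝ := fun n => (fs n z).toReal with hrz_def
  set r0 : ℕ → ℝ := fun n => (fs n (y 0)).toReal with hr0_def
  set rp : ℕ → ℝ := fun n => (fs n (y (n - 1))).toReal with hrp_def
  have hz_ne_top : ∀ n ∈ Finset.Icc 1 N, fs n z ≠ ⊤ :=
    ereal_term_ne_top (fun n hn => hfs_ne_bot n hn z) hz
  have hz_eq : ∀ n ∈ Finset.Icc 1 N, fs n z = (rz n : EReal) :=
    fun n hn => (EReal.coe_toReal (hz_ne_top n hn) (hfs_ne_bot n hn z)).symm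
  have ha_eq : ∀ n ∈ Finset.Icc 1 N, fs n (y n) = (ra n : EReal) := by
    intro n hn
    refine (EReal.coe_toReal ?_ (hfs_ne_bot n hn (y n))).symm
    intro htop
    have h := hmin n hn z
    rw [htop, hz_eq n hn, EReal.top_add_coe, ← EReal.coe_add, top_le_iff] at h
    exact EReal.coe_ne_top _ h
  have h0_eq : ∀ n ∈ Finset.Icc 1 N, fs n (y 0) = (r0 n : EReal) := by
    intro n hn
    refine (EReal.coe_toReal ?_ (hfs_ne_bot n hn (y 0))).symm
    intro htop
    have h := hlip₀ n hn
    rw [htop, ha_eq n hn, EReal.top_sub_coe, top_le_iff] at h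
    exact EReal.coe_ne_top _ h
  have hp_eq : ∀ n ∈ Finset.Icc 1 N, fs n (y (n - 1)) = (rp n : EReal) := by
    intro n hn
    refine (EReal.coe_toReal ?_ (hfs_ne_bot n hn (y (n - 1)))).symm
    intro htop
    have h := hlip₁ n hn
    rw [htop, ha_eq n hn, EReal.top_sub_coe, top_le_iff] at h
    exact EReal.coe_ne_top _ h
  have hlip₀r : ∀ n ∈ Finset.Icc 1 N, r0 n - ra n ≤ L * dist (y 0) (y n) := by
    intro n hn
    have h := hlip₀ n hn
    rw [h0_eq n hn, ha_eq n hn] at h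
    exact_mod_cast h
  have hlip₁r : ∀ n ∈ Finset.Icc 1 N,
      rp n - ra n ≤ L * dist (y (n - 1)) (y n) := by
    intro n hn
    have h := hlip₁ n hn
    rw [hp_eq n hn, ha_eq n hn] at h
    exact_mod_cast h
  have key : ∀ n ∈ Finset.Icc 1 N, ∀ w : H, ∀ rw' : ℝ, fs n w = (rw' : EReal) →
      2 * lam * (ra n - rw')
        ≤ dist (y (n - 1)) w ^ 2 - dist (y (n - 1)) (y n) ^ 2 - dist (y n) w ^ 2 :=
    fun n hn w rw' hw => prox_ineq G (fs n) (hfs_conv n hn) lam hlam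
      (y (n - 1)) (y n) w (ra n) rw' (ha_eq n hn) hw (hmin n hn)
  have hstep : ∀ n ∈ Finset.Icc 1 N,
      dist (y n) z ^ 2 ≤ dist (y (n - 1)) z ^ 2 - 2 * lam * (ra n - rz n) := by
    intro n hn
    have h := key n hn z (rz n) (hz_eq n hn)
    nlinarith [sq_nonneg (dist (y (n - 1)) (y n))]
  have hD : ∀ n ∈ Finset.Icc 1 N, dist (y (n - 1)) (y n) ≤ lam * L := by
    intro n hn
    have h := key n hn (y (n - 1)) (rp n) (hp_eq n hn)
    rw [dist_self, dist_comm (y n) (y (n - 1))] at h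
    have hl := hlip₁r n hn
    set D := dist (y (n - 1)) (y n) with hDd
    have hD0 : (0:ℝ) ≤ D := dist_nonneg
    rcases hD0.eq_or_lt with h0 | h0
    · rw [← h0]; positivity
    · have hmul : D * D ≤ (lam * L) * D := by nlinarith
      exact le_of_mul_le_mul_right hmul h0
  have hdist0 : ∀ m : ℕ, m ≤ N → dist (y 0) (y m) ≤ m * (lam * L) := by
    intro m
    induction m with
    | zero => intro _; simp
    | succ k ih =>
      intro hk
      have hk' : k ≤ N := by omega
      have hmem : k + 1 ∈ Finset.Icc 1 N := by simp only [Finset.mem_Icc]; omega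
      have hDk := hD (k + 1) hmem
      rw [show k + 1 - 1 = k from rfl] at hDk
      calc dist (y 0) (y (k + 1))
          ≤ dist (y 0) (y k) + dist (y k) (y (k + 1)) := dist_triangle _ _ _
        _ ≤ k * (lam * L) + lam * L := add_le_add (ih hk') hDk
        _ = ((k + 1 : ℕ) : ℝ) * (lam * L) := by push_cast; ring
  have htel : ∀ m : ℕ, m ≤ N →
      dist (y m) z ^ 2
        ≤ dist (y 0) z ^ 2 - 2 * lam * ∑ n ∈ Finset.Icc 1 m, (ra n - rz n) := by
    intro m
    induction m with
    | zero => intro _; simp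
    | succ k ih =>
      intro hk
      have hk' : k ≤ N := by omega
      have hmem : k + 1 ∈ Finset.Icc 1 N := by simp only [Finset.mem_Icc]; omega
      have hins : Finset.Icc 1 (k + 1) = insert (k + 1) (Finset.Icc 1 k) := by
        rw [← Finset.Ico_add_one_right_eq_Icc, (by exact Nat.Ico_succ_right_eq_insert_Ico (by omega) :
            Finset.Ico 1 (k + 1 + 1) = insert (k + 1) (Finset.Ico 1 (k + 1))),
          Finset.Ico_add_one_right_eq_Icc]
      have hnm : (k + 1) ∉ Finset.Icc 1 k := by simp
      rw [hins, Finset.sum_insert hnm]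
      have hs := hstep (k + 1) hmem
      rw [show k + 1 - 1 = k from rfl] at hs
      have hi := ih hk'
      nlinarith
  have hsumra : ∑ n ∈ Finset.Icc 1 N, (r0 n - ra n) ≤ N * ((N : ℝ) * (lam * L ^ 2)) := by
    have hb : ∀ n ∈ Finset.Icc 1 N, r0 n - ra n ≤ (N : ℝ) * (lam * L ^ 2) := by
      intro n hn
      have h1 := hlip₀r n hn
      have hnN : n ≤ N := (Finset.mem_Icc.mp hn).2
      have h2 := hdist0 n hnN
      have hcast : (n : ℝ) ≤ (N : ℝ) := by exact_mod_cast hnN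
      have h3 : dist (y 0) (y n) ≤ (N : ℝ) * (lam * L) :=
        h2.trans (mul_le_mul_of_nonneg_right hcast (by positivity))
      nlinarith [mul_le_mul_of_nonneg_left h3 hL.le]
    calc ∑ n ∈ Finset.Icc 1 N, (r0 n - ra n)
        ≤ ∑ _n ∈ Finset.Icc 1 N, ((N : ℝ) * (lam * L ^ 2)) := Finset.sum_le_sum hb
      _ = N * ((N : ℝ) * (lam * L ^ 2)) := by
          rw [Finset.sum_const, Nat.card_Icc]
          simp
  have hfinal : dist (y N) z ^ 2 ≤ dist (y 0) z ^ 2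
      - 2 * lam * ((∑ n ∈ Finset.Icc 1 N, r0 n) - ∑ n ∈ Finset.Icc 1 N, rz n)
      + 2 * lam ^ 2 * L ^ 2 * (N : ℝ) * ((N : ℝ) + 1) := by
    have h1 := htel N le_rfl
    have hsplit : ∑ n ∈ Finset.Icc 1 N, (ra n - rz n)
        = (∑ n ∈ Finset.Icc 1 N, ra n) - ∑ n ∈ Finset.Icc 1 N, rz n :=
      Finset.sum_sub_distrib _ _
    have hsplit2 : ∑ n ∈ Finset.Icc 1 N, (r0 n - ra n)
        = (∑ n ∈ Finset.Icc 1 N, r0 n) - ∑ n ∈ Finset.Icc 1 N, ra n :=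
      Finset.sum_sub_distrib _ _
    have hNpos : (0:ℝ) ≤ (N : ℝ) := Nat.cast_nonneg N
    nlinarith [mul_le_mul_of_nonneg_left hsumra (le_of_lt (by positivity : (0:ℝ) < 2 * lam)),
      mul_nonneg (mul_nonneg (mul_nonneg (sq_nonneg lam) (sq_nonneg L)) hNpos) hNpos,
      mul_nonneg (mul_nonneg (sq_nonneg lam) (sq_nonneg L)) hNpos]
  rw [Finset.sum_congr rfl h0_eq, Finset.sum_congr rfl hz_eq,
    ← ereal_coe_sum, ← ereal_coe_sum]
  have := hfinal
  push_cast
  exact_mod_cast hfinal
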